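/- Let S_0,…,S_N be holomorphic functions on a neighborhood of 0 in ℂ, not all identically zero, such that the Wronskians W_{jk} := S_k S_j' − S_j S_k' are not all identically zero, and let q_0,…,q_N ≥ 0 be reals. Then there exist r > 0 and C > 0 such that for all t ∈ (0,1) and all z with 0 < |z| < r, both G_t(z) := Σ_{0 ≤ j < k ≤ N} t^{2(q_j+q_k)} |W_{jk}(z)|² and D_t(z) := Σ_j t^{2q_j} |S_j(z)|² are positive, and | z · ( ∂_z G_t(z)/G_t(z) − 2 ∂_z D_t(z)/D_t(z) ) | ≤ C, where ∂_z G_t(z) = Σ_{j<k} t^{2(q_j+q_k)} W_{jk}'(z) conj(W_{jk}(z)) and ∂_z D_t(z) = Σ_j t^{2q_j} S_j'(z) conj(S_j(z)). (This says |z ∂_z ln h_t(z)| ≤ C for h_t = G_t/D_t².) -/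

import Mathlib

open Filter

private lemma analyticAt_deriv' {f : ℂ → ℂ} (hf : AnalyticAt ℂ f 0) :
    AnalyticAt ℂ (deriv f) 0 := by
  obtain ⟨s, hs, h⟩ := hf.exists_mem_nhds_analyticOnNhd
  exact h.deriv 0 (mem_of_mem_nhds hs)

private lemma key {f : ℂ → ℂ} (hf : AnalyticAt ℂ f 0) :
    ∃ r > (0:ℝ), ∃ c ≥ (0:ℝ), ∀ z : ℂ, 0 < ‖z‖ → ‖z‖ < r →
      (¬ f =ᶠ[nhds (0:ℂ)] 0 → f z ≠ 0) ∧
      ‖z * deriv f z‖ ≤ c * ‖f z‖ := by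
  by_cases h0 : f =ᶠ[nhds (0:ℂ)] 0
  · have hd : ∀ᶠ z in nhds (0:ℂ), deriv f z = 0 := by
      filter_upwards [h0.deriv] with z hz
      rw [hz]
      simp [Pi.zero_def]
    obtain ⟨ε, hε, hball⟩ := Metric.eventually_nhds_iff.mp hd
    refine ⟨ε, hε, 0, le_refl 0, fun z hz hzr => ⟨fun h => (h h0).elim, ?_⟩⟩
    have hz0 : deriv f z = 0 := hball (by simpa [Complex.dist_eq] using hzr)
    simp [hz0]
  · have hne : analyticOrderAt f 0 ≠ ⊤ := by
      intro h
      exact h0 (analyticOrderAt_eq_top.mp h)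
    obtain ⟨n, hn⟩ := WithTop.ne_top_iff_exists.mp hne
    obtain ⟨g, hg, hg0, hfg⟩ := (hf.analyticOrderAt_eq_natCast (n := n)).mp hn.symm
    set m := ‖g 0‖ / 2 with hm
    have hg0abs : 0 < ‖g 0‖ := norm_pos_iff.mpr hg0
    have hm0 : 0 < m := by positivity
    set M := ‖deriv g 0‖ + 1 with hM
    have hM0 : 0 < M := by positivity
    have hgc : ∀ᶠ z in nhds (0:ℂ), m < ‖g z‖ := by
      have hc : ContinuousAt (fun z => ‖g z‖) 0 :=
        continuous_norm.continuousAt.comp hg.continuousAt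
      exact hc.eventually (eventually_gt_nhds (half_lt_self hg0abs))
    have hdc : ∀ᶠ z in nhds (0:ℂ), ‖deriv g z‖ < M := by
      have hgd : AnalyticAt ℂ (deriv g) 0 := analyticAt_deriv' hg
      have hc : ContinuousAt (fun z => ‖deriv g z‖) 0 :=
        continuous_norm.continuousAt.comp hgd.continuousAt
      exact hc.eventually (eventually_lt_nhds (lt_add_one _))
    have hgdiff : ∀ᶠ z in nhds (0:ℂ), DifferentiableAt ℂ g z := by
      filter_upwards [hg.eventually_analyticAt] with z hz using hz.differentiableAt
    have hfg' : f =ᶠ[nhds (0:ℂ)] fun z => z ^ n * g z := by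
      filter_upwards [hfg] with z hz
      simpa using hz
    have hdf : ∀ᶠ z in nhds (0:ℂ), deriv f z = n * z ^ (n-1) * g z + z ^ n * deriv g z := by
      filter_upwards [hfg'.deriv, hgdiff] with z h1 h2
      rw [h1, deriv_fun_mul (differentiableAt_pow n) h2, deriv_pow_field]
    obtain ⟨ε, hε, hball⟩ := Metric.eventually_nhds_iff.mp
      (hgc.and (hdc.and ((hfg' : ∀ᶠ z in nhds (0:ℂ), f z = z ^ n * g z).and hdf)))
    refine ⟨min ε 1, lt_min hε one_pos, n + M / m, by positivity, fun z hz hzr => ?_⟩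
    obtain ⟨h1, h2, h3, h4⟩ := hball
      (show dist z 0 < ε by
        simpa [Complex.dist_eq] using lt_of_lt_of_le hzr (min_le_left _ _))
    have habs1 : ‖z‖ ≤ 1 := le_of_lt (lt_of_lt_of_le hzr (min_le_right _ _))
    have hz0 : z ≠ 0 := norm_pos_iff.mp hz
    have hgz0 : g z ≠ 0 := norm_pos_iff.mp (lt_trans hm0 h1)
    constructor
    · intro _
      rw [h3]
      exact mul_ne_zero (pow_ne_zero n hz0) hgz0
    · have hzn : z * deriv f z = n * z ^ n * g z + z ^ (n+1) * deriv g z := by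
        rw [h4]
        cases n with
        | zero => simp
        | succ k =>
          have hk : k + 1 - 1 = k := rfl
          rw [hk]
          ring
      rw [hzn]
      have hXnn : (0:ℝ) ≤ ‖z‖ ^ n := pow_nonneg (norm_nonneg z) n
      have hdivnn : (0:ℝ) ≤ M / m := le_of_lt (div_pos hM0 hm0)
      have hMle : M ≤ M / m * ‖g z‖ := by
        rw [div_mul_eq_mul_div, le_div_iff₀ hm0]
        exact mul_le_mul_of_nonneg_left h1.le hM0.le
      calc ‖n * z ^ n * g z + z ^ (n+1) * deriv g z‖
          ≤ ‖(n : ℂ) * z ^ n * g z‖ + ‖z ^ (n+1) * deriv g z‖ :=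
            norm_add_le _ _
        _ = n * ‖z‖ ^ n * ‖g z‖
            + ‖z‖ ^ (n+1) * ‖deriv g z‖ := by
            simp [norm_mul, norm_pow, Complex.norm_natCast]
        _ ≤ n * ‖z‖ ^ n * ‖g z‖ + ‖z‖ ^ n * M := by
            have hp : ‖z‖ ^ (n+1) ≤ ‖z‖ ^ n :=
              pow_le_pow_of_le_one (norm_nonneg z) habs1 (Nat.le_succ n)
            have := mul_le_mul hp h2.le (norm_nonneg _) hXnn
            linarith
        _ ≤ (n + M / m) * (‖z‖ ^ n * ‖g z‖) := by
            have h5 : ‖z‖ ^ n * M ≤ ‖z‖ ^ n * (M / m * ‖g z‖) :=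
              mul_le_mul_of_nonneg_left hMle hXnn
            nlinarith
        _ = (n + M / m) * ‖f z‖ := by
            rw [h3]
            simp [norm_mul, norm_pow, mul_comm]

open scoped Classical BigOperators

/-- Uniform bound `|z ∂_z ln h_t(z)| ≤ C` near `0`, uniformly in `t ∈ (0,1)`,
for `h_t = G_t / D_t²`. -/
theorem log_derivative_density_bound
    (N : ℕ)
    (S : ℕ → ℂ → ℂ) (q : ℕ → ℝ)
    (hS : ∀ j ≤ N, AnalyticAt ℂ (S j) 0)
    (hSne : ∃ j ≤ N, ¬ (S j) =ᶠ[nhds (0 : ℂ)] 0)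
    (hq : ∀ j ≤ N, 0 ≤ q j)
    (W : ℕ → ℕ → ℂ → ℂ)
    (hW : ∀ j k, W j k = fun z => S k z * deriv (S j) z - S j z * deriv (S k) z)
    (hWne : ∃ j k, j < k ∧ k ≤ N ∧ ¬ (W j k) =ᶠ[nhds (0 : ℂ)] 0)
    (G D : ℝ → ℂ → ℝ)
    (hG : ∀ t z, G t z = ∑ j ∈ Finset.range (N + 1), ∑ k ∈ Finset.Ico (j + 1) (N + 1),
      t ^ (2 * (q j + q k)) * ‖W j k z‖ ^ 2)
    (hD : ∀ t z, D t z = ∑ j ∈ Finset.range (N + 1),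
      t ^ (2 * q j) * ‖S j z‖ ^ 2) :
    ∃ r > (0 : ℝ), ∃ C > (0 : ℝ), ∀ t ∈ Set.Ioo (0 : ℝ) 1, ∀ z : ℂ,
      0 < ‖z‖ → ‖z‖ < r →
        0 < G t z ∧ 0 < D t z ∧
        ‖z *
          ((∑ j ∈ Finset.range (N + 1), ∑ k ∈ Finset.Ico (j + 1) (N + 1),
              ((t ^ (2 * (q j + q k)) : ℝ) : ℂ) * deriv (W j k) z * (starRingEnd ℂ) (W j k z))
            / (G t z : ℂ)
          - 2 * (∑ j ∈ Finset.range (N + 1),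
              ((t ^ (2 * q j) : ℝ) : ℂ) * deriv (S j) z * (starRingEnd ℂ) (S j z))
            / (D t z : ℂ))‖ ≤ C := by
  classical
  -- analyticity of the Wronskians
  have hWa : ∀ j, j ≤ N → ∀ k, k ≤ N → AnalyticAt ℂ (W j k) 0 := by
    intro j hj k hk
    rw [hW]
    exact ((hS k hk).mul (analyticAt_deriv' (hS j hj))).sub
      ((hS j hj).mul (analyticAt_deriv' (hS k hk)))
  -- choose radii and constants for the Wronskians
  have hch : ∀ j k : ℕ, ∃ r > (0:ℝ), ∃ c ≥ (0:ℝ),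
      (j ≤ N → k ≤ N → ∀ z : ℂ, 0 < ‖z‖ → ‖z‖ < r →
        (¬ (W j k) =ᶠ[nhds (0:ℂ)] 0 → W j k z ≠ 0) ∧
        ‖z * deriv (W j k) z‖ ≤ c * ‖W j k z‖) := by
    intro j k
    by_cases h : j ≤ N ∧ k ≤ N
    · obtain ⟨r, hr, c, hc, hp⟩ := key (hWa j h.1 k h.2)
      exact ⟨r, hr, c, hc, fun _ _ => hp⟩
    · exact ⟨1, one_pos, 0, le_refl 0, fun hj hk => absurd ⟨hj, hk⟩ h⟩
  choose rW hrW cW hcW hPW using hch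
  -- choose radii and constants for the sections
  have hchS : ∀ j : ℕ, ∃ r > (0:ℝ), ∃ c ≥ (0:ℝ),
      (j ≤ N → ∀ z : ℂ, 0 < ‖z‖ → ‖z‖ < r →
        (¬ (S j) =ᶠ[nhds (0:ℂ)] 0 → S j z ≠ 0) ∧
        ‖z * deriv (S j) z‖ ≤ c * ‖S j z‖) := by
    intro j
    by_cases h : j ≤ N
    · obtain ⟨r, hr, c, hc, hp⟩ := key (hS j h)
      exact ⟨r, hr, c, hc, fun _ => hp⟩
    · exact ⟨1, one_pos, 0, le_refl 0, fun hj => absurd hj h⟩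
  choose rS hrS cS hcS hPS using hchS
  -- finite index sets
  set Jset : Finset ℕ := Finset.range (N + 1) with hJset
  have hJ : Jset.Nonempty := ⟨0, by simp [hJset]⟩
  set Pset : Finset (ℕ × ℕ) := Jset ×ˢ Jset with hPset
  have hP : Pset.Nonempty := hJ.product hJ
  set r1 : ℝ := Jset.inf' hJ rS with hr1
  set r2 : ℝ := Pset.inf' hP (fun p => rW p.1 p.2) with hr2
  set cSm : ℝ := Jset.sup' hJ cS with hcSmdef
  set cWm : ℝ := Pset.sup' hP (fun p => cW p.1 p.2) with hcWmdef
  have hcSm0 : 0 ≤ cSm := le_trans (hcS 0) (Finset.le_sup' cS (by simp [hJset]))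
  have hcWm0 : 0 ≤ cWm :=
    le_trans (hcW 0 0) (Finset.le_sup' (fun p : ℕ × ℕ => cW p.1 p.2)
      (show ((0,0) : ℕ × ℕ) ∈ Pset by simp [hPset, hJset, Finset.mem_product]))
  have hcSle : ∀ j, j ≤ N → cS j ≤ cSm := fun j hj =>
    Finset.le_sup' cS (by simp [hJset, Nat.lt_succ_iff, hj])
  have hcWle : ∀ j k, j ≤ N → k ≤ N → cW j k ≤ cWm := fun j k hj hk =>
    Finset.le_sup' (fun p : ℕ × ℕ => cW p.1 p.2)
      (show ((j,k) : ℕ × ℕ) ∈ Pset by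
        simp [hPset, hJset, Finset.mem_product, Nat.lt_succ_iff, hj, hk])
  have hr1pos : 0 < r1 := by
    rw [hr1, Finset.lt_inf'_iff]
    intro j hj
    exact hrS j
  have hr2pos : 0 < r2 := by
    rw [hr2, Finset.lt_inf'_iff]
    intro p hp
    exact hrW p.1 p.2
  refine ⟨min r1 r2, lt_min hr1pos hr2pos, cWm + 2 * cSm + 1,
    by linarith, fun t ht z hz hzr => ?_⟩
  have ht0 : 0 < t := ht.1
  have hzrS : ∀ j, j ≤ N → ‖z‖ < rS j := fun j hj =>
    lt_of_lt_of_le hzr (le_trans (min_le_left _ _)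
      (Finset.inf'_le _ (by simp [hJset, Nat.lt_succ_iff, hj])))
  have hzrW : ∀ j k, j ≤ N → k ≤ N → ‖z‖ < rW j k := fun j k hj hk =>
    lt_of_lt_of_le hzr (le_trans (min_le_right _ _)
      (Finset.inf'_le _ (show ((j,k) : ℕ × ℕ) ∈ Pset by
        simp [hPset, hJset, Finset.mem_product, Nat.lt_succ_iff, hj, hk])))
  obtain ⟨j₀, hj₀, hj₀ne⟩ := hSne
  have hDpos : 0 < D t z := by
    rw [hD]
    refine Finset.sum_pos' (fun j hj => mul_nonneg (Real.rpow_nonneg ht0.le _)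
      (pow_nonneg (norm_nonneg _) 2))
      ⟨j₀, Finset.mem_range.mpr (Nat.lt_succ_of_le hj₀), ?_⟩
    have hs := (hPS j₀ hj₀ z hz (hzrS j₀ hj₀)).1 hj₀ne
    exact mul_pos (Real.rpow_pos_of_pos ht0 _) (pow_pos (norm_pos_iff.mpr hs) 2)
  obtain ⟨j₁, k₁, hjk₁, hk₁, hW₁ne⟩ := hWne
  have hj₁ : j₁ ≤ N := le_trans (le_of_lt hjk₁) hk₁
  have hGpos : 0 < G t z := by
    rw [hG]
    refine Finset.sum_pos' (fun j _ => Finset.sum_nonneg fun k _ =>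
      mul_nonneg (Real.rpow_nonneg ht0.le _) (pow_nonneg (norm_nonneg _) 2))
      ⟨j₁, Finset.mem_range.mpr (Nat.lt_succ_of_le hj₁), ?_⟩
    refine Finset.sum_pos' (fun k _ => mul_nonneg (Real.rpow_nonneg ht0.le _)
      (pow_nonneg (norm_nonneg _) 2))
      ⟨k₁, Finset.mem_Ico.mpr ⟨hjk₁, Nat.lt_succ_of_le hk₁⟩, ?_⟩
    have hwz := (hPW j₁ k₁ hj₁ hk₁ z hz (hzrW _ _ hj₁ hk₁)).1 hW₁ne
    exact mul_pos (Real.rpow_pos_of_pos ht0 _) (pow_pos (norm_pos_iff.mpr hwz) 2)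
  refine ⟨hGpos, hDpos, ?_⟩
  set aG : ℂ := ∑ j ∈ Finset.range (N + 1), ∑ k ∈ Finset.Ico (j + 1) (N + 1),
      ((t ^ (2 * (q j + q k)) : ℝ) : ℂ) * deriv (W j k) z * (starRingEnd ℂ) (W j k z) with haG
  set aD : ℂ := ∑ j ∈ Finset.range (N + 1),
      ((t ^ (2 * q j) : ℝ) : ℂ) * deriv (S j) z * (starRingEnd ℂ) (S j z) with haD
  -- bound the numerators
  have hNumD : ‖z * aD‖ ≤ cSm * D t z := by
    rw [haD, Finset.mul_sum]
    refine le_trans (norm_sum_le _ _) ?_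
    rw [hD, Finset.mul_sum]
    refine Finset.sum_le_sum fun j hj => ?_
    have hjN : j ≤ N := Nat.lt_succ_iff.mp (Finset.mem_range.mp hj)
    have hb := (hPS j hjN z hz (hzrS j hjN)).2
    have hta : (0:ℝ) ≤ t ^ (2 * q j) := Real.rpow_nonneg ht0.le _
    have hrw : z * (((t ^ (2 * q j) : ℝ) : ℂ) * deriv (S j) z * (starRingEnd ℂ) (S j z))
        = ((t ^ (2 * q j) : ℝ) : ℂ) * ((z * deriv (S j) z) * (starRingEnd ℂ) (S j z)) := by
      ring
    rw [hrw, norm_mul, norm_mul, Complex.norm_real, Complex.norm_conj, Real.norm_of_nonneg hta]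
    calc t ^ (2 * q j) * (‖z * deriv (S j) z‖ * ‖S j z‖)
        ≤ t ^ (2 * q j) * ((cS j * ‖S j z‖) * ‖S j z‖) :=
          mul_le_mul_of_nonneg_left
            (mul_le_mul_of_nonneg_right hb (norm_nonneg _)) hta
      _ = cS j * (t ^ (2 * q j) * ‖S j z‖ ^ 2) := by ring
      _ ≤ cSm * (t ^ (2 * q j) * ‖S j z‖ ^ 2) :=
          mul_le_mul_of_nonneg_right (hcSle j hjN)
            (mul_nonneg hta (pow_nonneg (norm_nonneg _) 2))
  have hNumG : ‖z * aG‖ ≤ cWm * G t z := by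
    rw [haG, Finset.mul_sum]
    refine le_trans (norm_sum_le _ _) ?_
    rw [hG, Finset.mul_sum]
    refine Finset.sum_le_sum fun j hj => ?_
    have hjN : j ≤ N := Nat.lt_succ_iff.mp (Finset.mem_range.mp hj)
    rw [Finset.mul_sum]
    refine le_trans (norm_sum_le _ _) ?_
    rw [Finset.mul_sum]
    refine Finset.sum_le_sum fun k hk => ?_
    have hkN : k ≤ N := Nat.lt_succ_iff.mp (Finset.mem_Ico.mp hk).2
    have hb := (hPW j k hjN hkN z hz (hzrW j k hjN hkN)).2
    have hta : (0:ℝ) ≤ t ^ (2 * (q j + q k)) := Real.rpow_nonneg ht0.le _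
    have hrw : z * (((t ^ (2 * (q j + q k)) : ℝ) : ℂ) * deriv (W j k) z
          * (starRingEnd ℂ) (W j k z))
        = ((t ^ (2 * (q j + q k)) : ℝ) : ℂ)
          * ((z * deriv (W j k) z) * (starRingEnd ℂ) (W j k z)) := by
      ring
    rw [hrw, norm_mul, norm_mul, Complex.norm_real, Complex.norm_conj, Real.norm_of_nonneg hta]
    calc t ^ (2 * (q j + q k)) * (‖z * deriv (W j k) z‖ * ‖W j k z‖)
        ≤ t ^ (2 * (q j + q k)) * ((cW j k * ‖W j k z‖) * ‖W j k z‖) :=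
          mul_le_mul_of_nonneg_left
            (mul_le_mul_of_nonneg_right hb (norm_nonneg _)) hta
      _ = cW j k * (t ^ (2 * (q j + q k)) * ‖W j k z‖ ^ 2) := by ring
      _ ≤ cWm * (t ^ (2 * (q j + q k)) * ‖W j k z‖ ^ 2) :=
          mul_le_mul_of_nonneg_right (hcWle j k hjN hkN)
            (mul_nonneg hta (pow_nonneg (norm_nonneg _) 2))
  -- put everything together
  have hsplit : z * (aG / ((G t z : ℝ) : ℂ) - 2 * aD / ((D t z : ℝ) : ℂ))
      = (z * aG) / ((G t z : ℝ) : ℂ) - 2 * ((z * aD) / ((D t z : ℝ) : ℂ)) := by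
    ring
  rw [hsplit]
  have htri : ‖(z * aG) / ((G t z : ℝ) : ℂ)
        - 2 * ((z * aD) / ((D t z : ℝ) : ℂ))‖
      ≤ ‖(z * aG) / ((G t z : ℝ) : ℂ)‖
        + ‖2 * ((z * aD) / ((D t z : ℝ) : ℂ))‖ := by
    exact norm_sub_le _ _
  refine le_trans htri ?_
  have e1 : ‖(z * aG) / ((G t z : ℝ) : ℂ)‖ = ‖z * aG‖ / G t z := by
    rw [norm_div, Complex.norm_real, Real.norm_of_nonneg hGpos.le]
  have e2 : ‖2 * ((z * aD) / ((D t z : ℝ) : ℂ))‖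
      = 2 * (‖z * aD‖ / D t z) := by
    rw [norm_mul, norm_div, Complex.norm_real, Real.norm_of_nonneg hDpos.le, Complex.norm_two]
  rw [e1, e2]
  have b1 : ‖z * aG‖ / G t z ≤ cWm := (div_le_iff₀ hGpos).mpr hNumG
  have b2 : ‖z * aD‖ / D t z ≤ cSm := (div_le_iff₀ hDpos).mpr hNumD
  linarith
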